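/- If a doctrine (C,P) validates the axiom of choice, the base C has a stable initial object 0, and all posets P(A) are nonempty, then every arrow k : X → 0 in C is an isomorphism (assuming C is non-degenerate, i.e. there is no arrow 1 → 0). -/

import Mathlib

open CategoryTheory CategoryTheory.Limits

universe w v u

/-- A doctrine: a contravariant functor from a category with finite products
to partially ordered sets, presented via a family of fibers `P` and monotone
reindexing maps. -/
structure Doctrine (C : Type u) [Category.{v} C] (P : C → Type w)
    [∀ A, PartialOrder (P A)] where
  map : ∀ {X A : C}, (X ⟶ A) → P A → P X
  map_mono : ∀ {X A : C} (f : X ⟶ A) ⦃α β : P A⦄, α ≤ β → map f α ≤ map f β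
  map_id : ∀ {A : C} (α : P A), map (𝟙 A) α = α
  map_comp : ∀ {X Y A : C} (f : X ⟶ Y) (g : Y ⟶ A) (α : P A),
    map (f ≫ g) α = map f (map g α)

variable {C : Type u} [Category.{v} C] {P : C → Type w}

/-- The opposite doctrine `P^o`, with fibers the opposite posets. -/
def Doctrine.op [∀ A, PartialOrder (P A)] (D : Doctrine C P) :
    Doctrine C (fun A => (P A)ᵒᵈ) where
  map f α := OrderDual.toDual (D.map f (OrderDual.ofDual α))
  map_mono f _ _ h := D.map_mono f h
  map_id := D.map_id
  map_comp := D.map_comp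

/-- Comprehension structure on a doctrine with fiberwise top elements. -/
structure Comprehension [∀ A, PartialOrder (P A)] [∀ A, OrderTop (P A)]
    (D : Doctrine C P) where
  cObj : ∀ {A : C}, P A → C
  cArr : ∀ {A : C} (α : P A), cObj α ⟶ A
  map_cArr : ∀ {A : C} (α : P A), D.map (cArr α) α = ⊤
  univ : ∀ {A Y : C} (α : P A) (f : Y ⟶ A), D.map f α = ⊤ →
    ∃! k : Y ⟶ cObj α, k ≫ cArr α = f

/-- Fullness of comprehension: the functor `α ↦ ⌊α⌋` into subobjects is full. -/
def Comprehension.IsFull [∀ A, PartialOrder (P A)] [∀ A, OrderTop (P A)]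
    {D : Doctrine C P} (cmp : Comprehension D) : Prop :=
  ∀ (A : C) (α β : P A) (g : cmp.cObj α ⟶ cmp.cObj β),
    g ≫ cmp.cArr β = cmp.cArr α → α ≤ β

/-- Co-comprehension structure on a doctrine with fiberwise bottom elements. -/
structure CoComprehension [∀ A, PartialOrder (P A)] [∀ A, OrderBot (P A)]
    (D : Doctrine C P) where
  oObj : ∀ {A : C}, P A → C
  oArr : ∀ {A : C} (α : P A), oObj α ⟶ A
  map_oArr : ∀ {A : C} (α : P A), D.map (oArr α) α = ⊥
  univ : ∀ {A Y : C} (α : P A) (f : Y ⟶ A), D.map f α = ⊥ →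
    ∃! k : Y ⟶ oObj α, k ≫ oArr α = f

/-- Fullness of co-comprehension: the contravariant functor `α ↦ ⌈α⌉` into
subobjects is full. -/
def CoComprehension.IsFull [∀ A, PartialOrder (P A)] [∀ A, OrderBot (P A)]
    {D : Doctrine C P} (co : CoComprehension D) : Prop :=
  ∀ (A : C) (α β : P A) (g : co.oObj β ⟶ co.oObj α),
    g ≫ co.oArr α = co.oArr β → α ≤ β

/-- A stable initial object: an initial object `Z` with `X × Z ≅ Z` for all `X`. -/
def StableInitial [HasFiniteProducts C] (Z : C) : Prop :=
  Nonempty (IsInitial Z) ∧ ∀ X : C, Nonempty ((X ⨯ Z) ≅ Z)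

/-- The axiom of choice for a doctrine: along every projection `π_Γ : Γ × A → Γ`
with `A` not a stable initial object, reindexing has a left adjoint, and every
`ψ ∈ P(Γ × A)` has a choice arrow `ε_ψ : Γ ⟶ A` with `Σ_{π_Γ}ψ = ⟨id, ε_ψ⟩*ψ`. -/
structure AxChoice [HasFiniteProducts C] [∀ A, PartialOrder (P A)]
    (D : Doctrine C P) where
  Sig : ∀ (Γ A : C), ¬ StableInitial A → P (Γ ⨯ A) → P Γ
  adj : ∀ {Γ A : C} (h : ¬ StableInitial A) (ψ : P (Γ ⨯ A)) (β : P Γ),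
    Sig Γ A h ψ ≤ β ↔ ψ ≤ D.map prod.fst β
  eps : ∀ {Γ A : C}, ¬ StableInitial A → P (Γ ⨯ A) → (Γ ⟶ A)
  eps_spec : ∀ {Γ A : C} (h : ¬ StableInitial A) (ψ : P (Γ ⨯ A)),
    Sig Γ A h ψ = D.map (prod.lift (𝟙 Γ) (eps h ψ)) ψ

/-- Elementary structure: equality predicates `δ_A` such that
`ψ ↦ π₁*ψ ⊓ π₂₃*δ_A` is left adjoint to reindexing along `id_X × Δ_A`. -/
structure Elementary [HasFiniteProducts C] [∀ A, SemilatticeInf (P A)]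
    (D : Doctrine C P) where
  eq : ∀ A : C, P (A ⨯ A)
  eq_adj : ∀ (X A : C) (ψ : P (X ⨯ A)) (φ : P ((X ⨯ A) ⨯ A)),
    (D.map prod.fst ψ ⊓ D.map (prod.map prod.snd (𝟙 A)) (eq A)) ≤ φ ↔
      ψ ≤ D.map (prod.lift (𝟙 (X ⨯ A)) prod.snd) φ

/-- An eaco: an elementary doctrine with full co-comprehension satisfying AC,
together with the compatibility of choice arrows for graphs of co-comprehension
arrows with reindexing. -/
structure Eaco [HasFiniteProducts C] [∀ A, SemilatticeInf (P A)]
    [∀ A, OrderBot (P A)] (D : Doctrine C P) where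
  elem : Elementary D
  cocmp : CoComprehension D
  full : cocmp.IsFull
  ac : AxChoice D
  compat : ∀ {X A : C} (f : X ⟶ A) (α : P A)
      (h1 : ¬ StableInitial (cocmp.oObj α))
      (h2 : ¬ StableInitial (cocmp.oObj (D.map f α))),
      D.map f (D.map (prod.lift (𝟙 A)
          (ac.eps h1 (D.map (prod.map (𝟙 A) (cocmp.oArr α)) (elem.eq A))))
        (D.map (prod.map (𝟙 A) (cocmp.oArr α)) (elem.eq A)))
      = D.map (prod.lift (𝟙 X)
          (ac.eps h2 (D.map (prod.map (𝟙 X) (cocmp.oArr (D.map f α))) (elem.eq X))))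
        (D.map (prod.map (𝟙 X) (cocmp.oArr (D.map f α))) (elem.eq X))

/-- Weak power objects: the doctrine is higher order. -/
structure HigherOrder [HasFiniteProducts C] [∀ A, PartialOrder (P A)]
    (D : Doctrine C P) where
  pow : C → C
  mem : ∀ A : C, P (A ⨯ pow A)
  classify : ∀ (A Y : C) (φ : P (A ⨯ Y)),
    ∃ χ : Y ⟶ pow A, D.map (prod.map (𝟙 A) χ) (mem A) = φ

/-- A heaco: a higher order eaco. -/
structure Heaco [HasFiniteProducts C] [∀ A, SemilatticeInf (P A)]
    [∀ A, OrderBot (P A)] (D : Doctrine C P) where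
  eaco : Eaco D
  ho : HigherOrder D

/-- Implicational structure relative to right adjoints `Pi` along projections. -/
structure Implicational [HasFiniteProducts C] [∀ A, PartialOrder (P A)]
    (D : Doctrine C P) (Pi : ∀ (Γ A : C), P (Γ ⨯ A) → P Γ) where
  imp : ∀ {A : C}, P A → P A → P A
  map_imp : ∀ {X A : C} (f : X ⟶ A) (α β : P A),
    D.map f (imp α β) = imp (D.map f α) (D.map f β)
  pi_imp : ∀ {Γ A : C} (α : P Γ) (β : P (Γ ⨯ A)),
    Pi Γ A (imp (D.map prod.fst α) β) = imp α (Pi Γ A β)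
  ax_a : ∀ {A : C} (φ ψ : P A), φ ≤ imp ψ φ
  ax_b : ∀ {A : C} (γ φ ψ : P A), imp γ (imp φ ψ) ≤ imp (imp γ φ) (imp γ ψ)
  ax_c : ∀ {A : C} (γ φ ψ : P A), γ ≤ imp φ ψ → γ ≤ φ → γ ≤ ψ
  ax_d : ∀ {A : C} (γ φ ψ : P A), φ ≤ ψ → γ ≤ imp φ ψ

/-- A tripos: a Heyting-algebra valued doctrine with `Σ` and `Π` along
projections satisfying Beck–Chevalley, equality predicates, and weak power
objects. -/
structure Tripos [HasFiniteProducts C] [∀ A, PartialOrder (P A)]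
    (D : Doctrine C P) where
  inf : ∀ {A : C}, P A → P A → P A
  sup : ∀ {A : C}, P A → P A → P A
  himp : ∀ {A : C}, P A → P A → P A
  top : ∀ A : C, P A
  bot : ∀ A : C, P A
  inf_le_left : ∀ {A : C} (α β : P A), inf α β ≤ α
  inf_le_right : ∀ {A : C} (α β : P A), inf α β ≤ β
  le_inf : ∀ {A : C} (γ α β : P A), γ ≤ α → γ ≤ β → γ ≤ inf α β
  le_sup_left : ∀ {A : C} (α β : P A), α ≤ sup α β
  le_sup_right : ∀ {A : C} (α β : P A), β ≤ sup α β
  sup_le : ∀ {A : C} (α β γ : P A), α ≤ γ → β ≤ γ → sup α β ≤ γ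
  le_top : ∀ {A : C} (α : P A), α ≤ top A
  bot_le : ∀ {A : C} (α : P A), bot A ≤ α
  himp_adj : ∀ {A : C} (γ α β : P A), γ ≤ himp α β ↔ inf γ α ≤ β
  map_inf : ∀ {X A : C} (f : X ⟶ A) (α β : P A),
    D.map f (inf α β) = inf (D.map f α) (D.map f β)
  map_sup : ∀ {X A : C} (f : X ⟶ A) (α β : P A),
    D.map f (sup α β) = sup (D.map f α) (D.map f β)
  map_himp : ∀ {X A : C} (f : X ⟶ A) (α β : P A),
    D.map f (himp α β) = himp (D.map f α) (D.map f β)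
  map_top : ∀ {X A : C} (f : X ⟶ A), D.map f (top A) = top X
  map_bot : ∀ {X A : C} (f : X ⟶ A), D.map f (bot A) = bot X
  Sig : ∀ (Γ A : C), P (Γ ⨯ A) → P Γ
  Sig_adj : ∀ {Γ A : C} (ψ : P (Γ ⨯ A)) (β : P Γ),
    Sig Γ A ψ ≤ β ↔ ψ ≤ D.map prod.fst β
  Sig_bc : ∀ {Γ Δ A : C} (f : Δ ⟶ Γ) (ψ : P (Γ ⨯ A)),
    D.map f (Sig Γ A ψ) = Sig Δ A (D.map (prod.map f (𝟙 A)) ψ)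
  Pi : ∀ (Γ A : C), P (Γ ⨯ A) → P Γ
  Pi_adj : ∀ {Γ A : C} (ψ : P (Γ ⨯ A)) (β : P Γ),
    β ≤ Pi Γ A ψ ↔ D.map prod.fst β ≤ ψ
  Pi_bc : ∀ {Γ Δ A : C} (f : Δ ⟶ Γ) (ψ : P (Γ ⨯ A)),
    D.map f (Pi Γ A ψ) = Pi Δ A (D.map (prod.map f (𝟙 A)) ψ)
  eq : ∀ X : C, P (X ⨯ X)
  eq_spec : ∀ {X : C} (α : P (X ⨯ X)),
    top X ≤ D.map (prod.lift (𝟙 X) (𝟙 X)) α ↔ eq X ≤ α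
  pow : C → C
  mem : ∀ A : C, P (A ⨯ pow A)
  classify : ∀ (A Y : C) (φ : P (A ⨯ Y)),
    ∃ χ : Y ⟶ pow A, D.map (prod.map (𝟙 A) χ) (mem A) = φ

/-- If a doctrine validates AC, the base has a stable initial
object, all fibers are nonempty, and the base is non-degenerate (no arrow
`1 ⟶ 0`), then every arrow `k : X ⟶ 0` into the stable initial object is an
isomorphism. -/
theorem statement8 {C : Type u} [Category.{v} C] [HasFiniteProducts C]
    {P : C → Type w} [∀ A, PartialOrder (P A)]
    (D : Doctrine C P) (ac : AxChoice D)
    (Z : C) (hZ : StableInitial Z)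
    (hne : ∀ A : C, Nonempty (P A))
    (hnd : ¬ Nonempty ((⊤_ C) ⟶ Z))
    {X : C} (k : X ⟶ Z) : IsIso k := by
  obtain ⟨⟨hI⟩, hst⟩ := hZ
  obtain ⟨e⟩ := hst X
  have hXZ : IsInitial (X ⨯ Z) := hI.ofIso e.symm
  have key : ∀ {Y : C} (f g : X ⟶ Y), f = g := by
    intro Y f g
    have h1 : prod.lift (𝟙 X) k ≫ (prod.fst ≫ f) = f := by
      rw [← Category.assoc, prod.lift_fst, Category.id_comp]
    have h2 : prod.lift (𝟙 X) k ≫ (prod.fst ≫ g) = g := by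
      rw [← Category.assoc, prod.lift_fst, Category.id_comp]
    rw [← h1, ← h2, hXZ.hom_ext (prod.fst ≫ f) (prod.fst ≫ g)]
  exact ⟨hI.to X, key _ _, hI.hom_ext _ _⟩
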